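/- Let E ⊆ [0,∞), let τ̃ = {τₙ} be an almost decreasing sequence in E∖{0} with τₙ → 0, and let {(aₙ,bₙ)} ∈ Ĩ_E with ã ≍ τ̃. Then the sequences {aₙ} and {bₙ} are both almost decreasing. -/

import Mathlib

open Filter Set Topology ENNReal

/-- λ(E,0,h): the supremum of lengths of open subintervals of (0,h) disjoint from E. -/
noncomputable def lambda0 (E : Set ℝ) (h : ℝ) : ℝ :=
  sSup {l : ℝ | ∃ a b : ℝ, 0 ≤ a ∧ a ≤ b ∧ b ≤ h ∧ Set.Ioo a b ∩ E = ∅ ∧ l = b - a}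

/-- p⁺(E,0): the right porosity of E at 0. -/
noncomputable def porosity (E : Set ℝ) : ℝ :=
  Filter.limsup (fun h => lambda0 E h / h) (nhdsWithin 0 (Set.Ioi 0))

/-- 0 is an accumulation point of E (E ⊆ [0,∞), relative topology of [0,∞)). -/
def AccZero (E : Set ℝ) : Prop := ∀ ε > 0, ∃ x ∈ E, 0 < x ∧ x < ε

/-- (a,b) is a connected component of the exterior of E in [0,∞):
an open interval in [0,∞) disjoint from E, maximal with this property. -/
def IsCompExt (E : Set ℝ) (a b : ℝ) : Prop :=
  0 ≤ a ∧ a < b ∧ Set.Ioo a b ∩ E = ∅ ∧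
  ∀ c d : ℝ, 0 ≤ c → Set.Ioo a b ⊆ Set.Ioo c d → (c, d) ≠ (a, b) → Set.Ioo c d ∩ E ≠ ∅

/-- Membership in Ĩ_E. -/
def memIE (E : Set ℝ) (A : ℕ → ℝ × ℝ) : Prop :=
  (∀ n, 0 < (A n).1) ∧ (∀ n, IsCompExt E (A n).1 (A n).2) ∧
  Filter.Tendsto (fun n => (A n).1) Filter.atTop (nhds 0) ∧
  Filter.Tendsto (fun n => ((A n).2 - (A n).1) / (A n).2) Filter.atTop (nhds 1)

/-- Almost decreasing sequence: eventually nonincreasing. -/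
def AlmostDecr (τ : ℕ → ℝ) : Prop := ∀ᶠ n in Filter.atTop, τ (n + 1) ≤ τ n

/-- Membership in Ẽ₀^d: almost decreasing sequences in E∖{0} tending to 0. -/
def memE0d (E : Set ℝ) (τ : ℕ → ℝ) : Prop :=
  AlmostDecr τ ∧ Filter.Tendsto τ Filter.atTop (nhds 0) ∧ ∀ n, τ n ∈ E \ {0}

/-- Weak equivalence ≍ of sequences: c₁ aₙ ≤ γₙ ≤ c₂ aₙ for large n. -/
def SeqEquiv (a γ : ℕ → ℝ) : Prop :=
  ∃ c₁ c₂ : ℝ, 0 < c₁ ∧ 0 < c₂ ∧ ∀ᶠ n in Filter.atTop, c₁ * a n ≤ γ n ∧ γ n ≤ c₂ * a n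

/-- E is τ̃-strongly porous. -/
def StronglyPorousWrt (E : Set ℝ) (τ : ℕ → ℝ) : Prop :=
  ∃ A : ℕ → ℝ × ℝ, memIE E A ∧ SeqEquiv (fun n => (A n).1) τ

/-- E is completely strongly porous at 0. -/
def CSP (E : Set ℝ) : Prop := ∀ τ : ℕ → ℝ, memE0d E τ → StronglyPorousWrt E τ

/-- Membership in Ĩ_E^d: first coordinates almost decreasing. -/
def memIEd (E : Set ℝ) (A : ℕ → ℝ × ℝ) : Prop := memIE E A ∧ AlmostDecr (fun n => (A n).1)

/-- Membership in Ĩ_E^{sd}: first coordinates eventually strictly decreasing. -/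
def memIEsd (E : Set ℝ) (A : ℕ → ℝ × ℝ) : Prop :=
  memIE E A ∧ ∀ᶠ n in Filter.atTop, (A (n + 1)).1 < (A n).1

/-- The preorder Ã ⪯ L̃. -/
def Prec (A L : ℕ → ℝ × ℝ) : Prop :=
  ∃ N₁ : ℕ, ∃ f : ℕ → ℕ, ∀ n ≥ N₁, (A n).1 = (L (f n)).1

/-- L̃ is universal: every Ã ∈ Ĩ_E^d satisfies Ã ⪯ L̃. -/
def Universal (E : Set ℝ) (L : ℕ → ℝ × ℝ) : Prop :=
  ∀ A : ℕ → ℝ × ℝ, memIEd E A → Prec A L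

/-- M(L̃) = limsup lₙ/mₙ₊₁ (in [0,∞]). -/
noncomputable def Mq (L : ℕ → ℝ × ℝ) : ℝ≥0∞ :=
  Filter.limsup (fun n => ENNReal.ofReal ((L n).1 / (L (n + 1)).2)) Filter.atTop

/-- C(τ̃) = inf over {(aₙ,bₙ)} ∈ Ĩ_E with τₙ ≤ aₙ eventually of limsup aₙ/τₙ. -/
noncomputable def Cseq (E : Set ℝ) (τ : ℕ → ℝ) : ℝ≥0∞ :=
  ⨅ (A : ℕ → ℝ × ℝ) (_ : memIE E A ∧ ∀ᶠ n in Filter.atTop, τ n ≤ (A n).1),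
    Filter.limsup (fun n => ENNReal.ofReal ((A n).1 / τ n)) Filter.atTop

/-- C_E = sup over τ̃ ∈ Ẽ₀^d of C(τ̃). -/
noncomputable def CE (E : Set ℝ) : ℝ≥0∞ := ⨆ (τ : ℕ → ℝ) (_ : memE0d E τ), Cseq E τ

/-- E is uniformly strongly porous at 0. -/
def USP (E : Set ℝ) : Prop :=
  ∃ c : ℝ, 0 < c ∧ ∀ τ : ℕ → ℝ, memE0d E τ → ∃ A : ℕ → ℝ × ℝ, memIE E A ∧
    (∀ᶠ n in Filter.atTop, τ n ≤ (A n).1) ∧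
    Filter.limsup (fun n => ENNReal.ofReal ((A n).1 / τ n)) Filter.atTop ≤ ENNReal.ofReal c

lemma comp_eq_or_disj (E : Set ℝ) {a b a' b' : ℝ} (h : IsCompExt E a b)
    (h' : IsCompExt E a' b') : (a = a' ∧ b = b') ∨ b ≤ a' ∨ b' ≤ a := by
  obtain ⟨ha0, hab, hdisj, hmax⟩ := h
  obtain ⟨ha0', hab', hdisj', hmax'⟩ := h'
  by_cases hover : (Set.Ioo a b ∩ Set.Ioo a' b').Nonempty
  · left
    obtain ⟨x, ⟨hx1, hx2⟩, hx3, hx4⟩ := hover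
    have hu : Set.Ioo a b ∪ Set.Ioo a' b' = Set.Ioo (min a a') (max b b') :=
      Set.Ioo_union_Ioo' (lt_trans hx3 hx2) (lt_trans hx1 hx4)
    have hEu : Set.Ioo (min a a') (max b b') ∩ E = ∅ := by
      rw [← hu, Set.union_inter_distrib_right, hdisj, hdisj', Set.union_empty]
    have h1 : (min a a', max b b') = (a, b) := by
      by_contra hne
      exact hmax _ _ (le_min ha0 ha0') (hu ▸ Set.subset_union_left) hne hEu
    have h2 : (min a a', max b b') = (a', b') := by
      by_contra hne
      exact hmax' _ _ (le_min ha0 ha0') (hu ▸ Set.subset_union_right) hne hEu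
    rw [h1] at h2
    exact ⟨(Prod.mk.injEq _ _ _ _ ▸ h2).1, (Prod.mk.injEq _ _ _ _ ▸ h2).2⟩
  · right
    by_contra hc
    push_neg at hc
    obtain ⟨h1, h2⟩ := hc
    apply hover
    have hm : max a a' < min b b' := max_lt (lt_min hab h2) (lt_min h1 hab')
    set x := (max a a' + min b b') / 2 with hx
    have hx1 : max a a' < x := by rw [hx]; linarith
    have hx2 : x < min b b' := by rw [hx]; linarith
    exact ⟨x, ⟨lt_of_le_of_lt (le_max_left _ _) hx1, lt_of_lt_of_le hx2 (min_le_left _ _)⟩,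
      lt_of_le_of_lt (le_max_right _ _) hx1, lt_of_lt_of_le hx2 (min_le_right _ _)⟩

theorem stmt5 (E : Set ℝ) (hE : E ⊆ Set.Ici 0) (τ : ℕ → ℝ) (hτ : memE0d E τ)
    (A : ℕ → ℝ × ℝ) (hA : memIE E A) (heq : SeqEquiv (fun n => (A n).1) τ) :
    AlmostDecr (fun n => (A n).1) ∧ AlmostDecr (fun n => (A n).2) := by
  obtain ⟨hτdec, hτ0, hτE⟩ := hτ
  obtain ⟨hpos, hcomp, ha0, hratio⟩ := hA
  obtain ⟨c₁, c₂, hc₁, hc₂, hcc⟩ := heq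
  simp only at hcc
  have hab : ∀ n, (A n).1 < (A n).2 := fun n => (hcomp n).2.1
  have hbpos : ∀ n, 0 < (A n).2 := fun n => lt_trans (hpos n) (hab n)
  have h1 : Tendsto (fun n => (A n).1 / (A n).2) atTop (nhds 0) := by
    have he : (fun n => (A n).1 / (A n).2)
        = fun n => 1 - ((A n).2 - (A n).1) / (A n).2 := by
      funext n
      have hb := (hbpos n).ne'
      field_simp
      ring
    rw [he]
    have h := (tendsto_const_nhds (x := (1:ℝ)) (f := atTop)).sub hratio
    simpa using h
  have h2 : ∀ᶠ n in atTop, (A n).1 / (A n).2 < c₁ / c₂ :=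
    h1.eventually_lt_const (div_pos hc₁ hc₂)
  obtain ⟨N₁, hN₁⟩ := eventually_atTop.1 hτdec
  obtain ⟨N₂, hN₂⟩ := eventually_atTop.1 hcc
  obtain ⟨N₃, hN₃⟩ := eventually_atTop.1 h2
  set N := max N₁ (max N₂ N₃) with hN
  have key : ∀ n ≥ N, (A (n + 1)).1 ≤ (A n).1 := by
    intro n hn
    by_contra hlt
    push_neg at hlt
    rcases comp_eq_or_disj E (hcomp n) (hcomp (n + 1)) with ⟨he, _⟩ | hle | hle
    · linarith
    · have t1 : c₁ * (A (n + 1)).1 ≤ τ (n + 1) :=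
        (hN₂ (n + 1) (by omega)).1
      have t2 : τ (n + 1) ≤ τ n := hN₁ n (by omega)
      have t3 : τ n ≤ c₂ * (A n).1 := (hN₂ n (by omega)).2
      have t4 : (A n).1 / (A n).2 < c₁ / c₂ := hN₃ n (by omega)
      have t5 : c₂ * (A n).1 < c₁ * (A n).2 := by
        rw [div_lt_div_iff₀ (hbpos n) hc₂] at t4; linarith
      have t6 : c₁ * (A n).2 ≤ c₁ * (A (n + 1)).1 :=
        mul_le_mul_of_nonneg_left hle hc₁.le
      linarith
    · linarith [hab (n + 1)]
  constructor
  · exact eventually_atTop.2 ⟨N, key⟩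
  · refine eventually_atTop.2 ⟨N, fun n hn => ?_⟩
    rcases comp_eq_or_disj E (hcomp n) (hcomp (n + 1)) with ⟨_, he⟩ | hle | hle
    · exact he.ge
    · linarith [hab n, key n hn]
    · linarith [hab n]
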